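/- Every linear projection P from ℓ₁(E(D_n)) onto the cycle space Z(D_n) of the binary diamond graph D_n satisfies ‖P‖ ≥ (2n+1)/3. -/

import Mathlib

open Finset

/-- Edge set of the `n`-th binary diamond graph: each edge spawns 4 edges. -/
def DE : ℕ → Type
  | 0 => Unit
  | n + 1 => DE n × Fin 4

/-- Vertex set of the `n`-th binary diamond graph: two new vertices per old edge. -/
def DV : ℕ → Type
  | 0 => Fin 2
  | n + 1 => DV n ⊕ DE n × Fin 2

def deDecEq : ∀ n, DecidableEq (DE n)
  | 0 => inferInstanceAs (DecidableEq Unit)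
  | n + 1 => letI := deDecEq n; inferInstanceAs (DecidableEq (DE n × Fin 4))

instance (n : ℕ) : DecidableEq (DE n) := deDecEq n

def deFintype : ∀ n, Fintype (DE n)
  | 0 => inferInstanceAs (Fintype Unit)
  | n + 1 => letI := deFintype n; inferInstanceAs (Fintype (DE n × Fin 4))

instance (n : ℕ) : Fintype (DE n) := deFintype n

def dvDecEq : ∀ n, DecidableEq (DV n)
  | 0 => inferInstanceAs (DecidableEq (Fin 2))
  | n + 1 => letI := dvDecEq n; letI := deDecEq n
              inferInstanceAs (DecidableEq (DV n ⊕ DE n × Fin 2))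

instance (n : ℕ) : DecidableEq (DV n) := dvDecEq n

def dvFintype : ∀ n, Fintype (DV n)
  | 0 => inferInstanceAs (Fintype (Fin 2))
  | n + 1 => letI := dvFintype n; letI := deFintype n
              inferInstanceAs (Fintype (DV n ⊕ DE n × Fin 2))

instance (n : ℕ) : Fintype (DV n) := dvFintype n

/-- Endpoints of the edges of the diamond graph `D_n`; each edge `e = (u,v)`
(`u` the endpoint nearer the top) of `D_{n-1}` is replaced by the quadrilateral
`u, a, v, b` with edges `u a`, `a v`, `b v`, `u b`, each oriented downwards
(first coordinate nearer the top). `D_0` is a single edge `(0,1)` (`0` the top). -/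
def ends : ∀ n, DE n → DV n × DV n
  | 0, _ => ((0 : Fin 2), (1 : Fin 2))
  | n + 1, (e, i) =>
      let u : DV (n + 1) := Sum.inl (ends n e).1
      let v : DV (n + 1) := Sum.inl (ends n e).2
      let a : DV (n + 1) := Sum.inr (e, (0 : Fin 2))
      let b : DV (n + 1) := Sum.inr (e, (1 : Fin 2))
      if i.val = 0 then (u, a)
      else if i.val = 1 then (a, v)
      else if i.val = 2 then (b, v)
      else (u, b)

/-- The `n`-th binary diamond graph `D_n` (as an undirected simple graph). -/
def DG (n : ℕ) : SimpleGraph (DV n) where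
  Adj x y := x ≠ y ∧ ∃ e : DE n, ends n e = (x, y) ∨ ends n e = (y, x)
  symm := by
    constructor
    intro x y h
    obtain ⟨hxy, e, he⟩ := h
    exact ⟨hxy.symm, e, he.symm⟩
  loopless := by
    constructor
    intro x h
    exact h.1 rfl

/-- The cycle space `Z(D_n)` of the diamond graph: the space of circulations, i.e. the
kernel of the boundary operator. Over `ℝ` this is exactly the linear span of the signed
indicator functions of the cycles of `D_n` (w.r.t. the orientation given by `ends`). -/
def cycleSpace (n : ℕ) : Submodule ℝ (DE n → ℝ) where
  carrier := {f | ∀ v : DV n,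
    ∑ e : DE n, f e * ((if (ends n e).2 = v then (1 : ℝ) else 0) -
      (if (ends n e).1 = v then (1 : ℝ) else 0)) = 0}
  add_mem' := by
    intro a b ha hb
    intro v
    simp only [Pi.add_apply, add_mul]
    rw [Finset.sum_add_distrib, ha v, hb v]
    ring
  zero_mem' := by
    intro v
    simp
  smul_mem' := by
    intro c a ha
    intro v
    simp only [Pi.smul_apply, smul_eq_mul, mul_assoc]
    rw [← Finset.mul_sum, ha v, mul_zero]

/-- The `ℓ₁(E(D_n))` norm on the edge space. -/
def e1norm {n : ℕ} (f : DE n → ℝ) : ℝ := ∑ e, |f e|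

----------------- auxiliary definitions -----------------

instance dvDecL (n : ℕ) (a : DV (n+1)) (b : DV n ⊕ DE n × Fin 2) : Decidable (@Eq (DV (n+1)) a b) :=
  instDecidableEqDV (n+1) a b
instance dvDecR (n : ℕ) (a : DV n ⊕ DE n × Fin 2) (b : DV (n+1)) : Decidable (@Eq (DV (n+1)) a b) :=
  instDecidableEqDV (n+1) a b
instance dvDecLR (n : ℕ) (a b : DV n ⊕ DE n × Fin 2) : Decidable (@Eq (DV (n+1)) a b) :=
  instDecidableEqDV (n+1) a b
instance dvDec0L (a : DV 0) (b : Fin 2) : Decidable (@Eq (DV 0) a b) := instDecidableEqDV 0 a b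
instance dvDec0R (a : Fin 2) (b : DV 0) : Decidable (@Eq (DV 0) a b) := instDecidableEqDV 0 a b
instance dvDec0LR (a b : Fin 2) : Decidable (@Eq (DV 0) a b) := instDecidableEqDV 0 a b

def bsign (b : Bool) : ℝ := if b then -1 else 1

def pat1 : Fin 4 → ℝ := ![1, 1, -1, -1]
def patO : Bool → Fin 4 → ℝ := fun β => if β then ![0,0,1,-1] else ![1,-1,0,0]

def b1 : Fin 4 → Bool := ![false, false, true, true]
def b2 : Fin 4 → Bool := ![false, true, false, true]
def d4 (a b : Bool) : Fin 4 := if a then (if b then 3 else 2) else (if b then 1 else 0)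

def ENode : ℕ → Type
  | 0 => Empty
  | n + 1 => ENode n ⊕ DE n

def ONode : ℕ → Type
  | 0 => Empty
  | n + 1 => ONode n ⊕ (DE n × Bool)

def SP : ℕ → Type
  | 0 => Unit
  | n + 1 => SP n × (DE n → Bool) × (DE n × Bool → Bool)

def enDecEq : ∀ n, DecidableEq (ENode n)
  | 0 => inferInstanceAs (DecidableEq Empty)
  | n + 1 => letI := enDecEq n; inferInstanceAs (DecidableEq (ENode n ⊕ DE n))
instance (n : ℕ) : DecidableEq (ENode n) := enDecEq n

def enFintype : ∀ n, Fintype (ENode n)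
  | 0 => inferInstanceAs (Fintype Empty)
  | n + 1 => letI := enFintype n; inferInstanceAs (Fintype (ENode n ⊕ DE n))
instance (n : ℕ) : Fintype (ENode n) := enFintype n

def onDecEq : ∀ n, DecidableEq (ONode n)
  | 0 => inferInstanceAs (DecidableEq Empty)
  | n + 1 => letI := onDecEq n; inferInstanceAs (DecidableEq (ONode n ⊕ (DE n × Bool)))
instance (n : ℕ) : DecidableEq (ONode n) := onDecEq n

def onFintype : ∀ n, Fintype (ONode n)
  | 0 => inferInstanceAs (Fintype Empty)
  | n + 1 => letI := onFintype n; inferInstanceAs (Fintype (ONode n ⊕ (DE n × Bool)))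
instance (n : ℕ) : Fintype (ONode n) := onFintype n

def spDecEq : ∀ n, DecidableEq (SP n)
  | 0 => inferInstanceAs (DecidableEq Unit)
  | n + 1 => letI := spDecEq n;
      inferInstanceAs (DecidableEq (SP n × (DE n → Bool) × (DE n × Bool → Bool)))
instance (n : ℕ) : DecidableEq (SP n) := spDecEq n

def spFintype : ∀ n, Fintype (SP n)
  | 0 => inferInstanceAs (Fintype Unit)
  | n + 1 => letI := spFintype n;
      inferInstanceAs (Fintype (SP n × (DE n → Bool) × (DE n × Bool → Bool)))
instance (n : ℕ) : Fintype (SP n) := spFintype n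

def spInhabited : ∀ n, Inhabited (SP n)
  | 0 => inferInstanceAs (Inhabited Unit)
  | n + 1 => letI := spInhabited n;
      inferInstanceAs (Inhabited (SP n × (DE n → Bool) × (DE n × Bool → Bool)))
instance (n : ℕ) : Inhabited (SP n) := spInhabited n

def χ : ∀ n, ENode n → DE n → ℝ
  | 0, v, _ => v.elim
  | n + 1, Sum.inl v, x => χ n v x.1
  | _ + 1, Sum.inr v, x => if x.1 = v then pat1 x.2 else 0

def ψH : ∀ n, ONode n → DE n → ℝ
  | 0, v, _ => v.elim
  | n + 1, Sum.inl u, x => ψH n u x.1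
  | _ + 1, Sum.inr w, x => if x.1 = w.1 then patO w.2 x.2 else 0

def nrm2E : ∀ n, ENode n → ℝ
  | 0, v => v.elim
  | n + 1, Sum.inl v => 4 * nrm2E n v
  | _ + 1, Sum.inr _ => 4

def nrm2O : ∀ n, ONode n → ℝ
  | 0, v => v.elim
  | n + 1, Sum.inl v => 4 * nrm2O n v
  | _ + 1, Sum.inr _ => 2

def gg : ∀ n, SP n → DE n → DE n
  | 0, _, x => x
  | n + 1, s, x =>
      (gg n s.1 x.1, d4 (xor (b1 x.2) (s.2.1 x.1)) (xor (b2 x.2) (s.2.2 (x.1, b1 x.2))))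

def gh : ∀ n, SP n → DE n → DE n
  | 0, _, x => x
  | n + 1, s, x =>
      (gh n s.1 x.1,
        d4 (xor (b1 x.2) (s.2.1 (gh n s.1 x.1)))
           (xor (b2 x.2) (s.2.2 (gh n s.1 x.1, xor (b1 x.2) (s.2.1 (gh n s.1 x.1))))))

def NE : ∀ n, SP n → ENode n → ENode n
  | 0, _, v => v.elim
  | n + 1, s, Sum.inl v => Sum.inl (NE n s.1 v)
  | n + 1, s, Sum.inr v => Sum.inr (gg n s.1 v)

def MEi : ∀ n, SP n → ENode n → ENode n
  | 0, _, v => v.elim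
  | n + 1, s, Sum.inl v => Sum.inl (MEi n s.1 v)
  | n + 1, s, Sum.inr v => Sum.inr (gh n s.1 v)

def epsE : ∀ n, SP n → ENode n → ℝ
  | 0, _, v => v.elim
  | n + 1, s, Sum.inl v => epsE n s.1 v
  | _ + 1, s, Sum.inr v => bsign (s.2.1 v)

def NO : ∀ n, SP n → ONode n → ONode n
  | 0, _, u => u.elim
  | n + 1, s, Sum.inl u => Sum.inl (NO n s.1 u)
  | n + 1, s, Sum.inr w => Sum.inr (gg n s.1 w.1, xor w.2 (s.2.1 w.1))

def epsO : ∀ n, SP n → ONode n → ℝ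
  | 0, _, u => u.elim
  | n + 1, s, Sum.inl u => epsO n s.1 u
  | _ + 1, s, Sum.inr w => bsign (s.2.2 (w.1, w.2))

def X0 : ∀ n, DE n
  | 0 => ()
  | n + 1 => (X0 n, 0)

def Phi : ∀ n, DE n → ℝ
  | 0, _ => 1
  | n + 1, x => if x.1 = X0 n then pat1 x.2 else Phi n x.1

def ip {n : ℕ} (f g : DE n → ℝ) : ℝ := ∑ x, f x * g x

----------------- basic boolean/digit lemmas -----------------

lemma bsign_mul_self (b : Bool) : bsign b * bsign b = 1 := by cases b <;> norm_num [bsign]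
lemma abs_bsign (b : Bool) : |bsign b| = 1 := by cases b <;> norm_num [bsign]
lemma b1_d4 (a c : Bool) : b1 (d4 a c) = a := by cases a <;> cases c <;> rfl
lemma b2_d4 (a c : Bool) : b2 (d4 a c) = c := by cases a <;> cases c <;> rfl
lemma xor_cancel (a b : Bool) : xor (xor a b) b = a := by cases a <;> cases b <;> rfl
lemma d4_bits (i : Fin 4) : d4 (b1 i) (b2 i) = i := by fin_cases i <;> rfl

lemma pat1_transform (a c : Bool) (i : Fin 4) :
    pat1 (d4 (xor (b1 i) a) (xor (b2 i) c)) = bsign a * pat1 i := by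
  fin_cases i <;> cases a <;> cases c <;> simp [pat1, d4, b1, b2, bsign]

lemma patO_transform (a c β : Bool) (i : Fin 4) :
    patO β (d4 (xor (b1 i) a) (xor (b2 i) c)) = bsign c * patO (xor β a) i := by
  fin_cases i <;> cases a <;> cases c <;> cases β <;> simp [patO, d4, b1, b2, bsign]

lemma patO_eq_zero (β : Bool) (i : Fin 4) (h : b1 i ≠ β) : patO β i = 0 := by
  fin_cases i <;> cases β <;> simp_all [patO, b1] <;> rfl

----------------- inverse lemmas -----------------

theorem gh_gg : ∀ n (s : SP n) (x : DE n), gh n s (gg n s x) = x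
  | 0, _, _ => rfl
  | n+1, s, x => by
      obtain ⟨x, i⟩ := x
      simp only [gg, gh, gh_gg n s.1 x, b1_d4, b2_d4, xor_cancel]
      rw [d4_bits]

theorem gg_gh : ∀ n (s : SP n) (x : DE n), gg n s (gh n s x) = x
  | 0, _, _ => rfl
  | n+1, s, x => by
      obtain ⟨x, i⟩ := x
      simp only [gg, gh, gg_gh n s.1 x, b1_d4, b2_d4, xor_cancel]
      rw [d4_bits]

def ggEquiv (n : ℕ) (s : SP n) : DE n ≃ DE n :=
  ⟨gg n s, gh n s, gh_gg n s, gg_gh n s⟩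

theorem NE_MEi : ∀ n (s : SP n) (v : ENode n), NE n s (MEi n s v) = v
  | 0, _, v => v.elim
  | n+1, s, Sum.inl v => by simp only [NE, MEi, NE_MEi n s.1 v]; rfl
  | n+1, s, Sum.inr v => by simp only [NE, MEi, gg_gh n s.1 v]; rfl

theorem MEi_NE : ∀ n (s : SP n) (v : ENode n), MEi n s (NE n s v) = v
  | 0, _, v => v.elim
  | n+1, s, Sum.inl v => by simp only [NE, MEi, MEi_NE n s.1 v]; rfl
  | n+1, s, Sum.inr v => by simp only [NE, MEi, gh_gg n s.1 v]; rfl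

def NEquiv (n : ℕ) (s : SP n) : ENode n ≃ ENode n :=
  ⟨NE n s, MEi n s, MEi_NE n s, NE_MEi n s⟩

----------------- transformation of Haar functions -----------------

theorem chi_gh : ∀ n (s : SP n) (v : ENode n) (x : DE n),
    χ n v (gh n s x) = epsE n s v * χ n (NE n s v) x
  | 0, _, v, _ => v.elim
  | n+1, s, Sum.inl v, x => chi_gh n s.1 v x.1
  | n+1, s, Sum.inr v, x => by
      obtain ⟨x, i⟩ := x
      simp only [χ, gh, NE, epsE]
      by_cases hx : x = gg n s.1 v
      · subst hx
        simp only [gh_gg n s.1 v]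
        simp only [if_pos rfl, pat1_transform, if_true]
      · have h2 : gh n s.1 x ≠ v := by
          intro hc; exact hx (by rw [← hc, gg_gh])
        simp [h2, hx]

theorem psi_gh : ∀ n (s : SP n) (u : ONode n) (x : DE n),
    ψH n u (gh n s x) = epsO n s u * ψH n (NO n s u) x
  | 0, _, u, _ => u.elim
  | n+1, s, Sum.inl u, x => psi_gh n s.1 u x.1
  | n+1, s, Sum.inr w, x => by
      obtain ⟨x, i⟩ := x
      obtain ⟨v, β⟩ := w
      simp only [ψH, gh, NO, epsO]
      by_cases hx : x = gg n s.1 v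
      · subst hx
        simp only [gh_gg n s.1 v]
        rw [patO_transform]
        by_cases hb : b1 i = xor β (s.2.1 v)
        · have h3 : xor (b1 i) (s.2.1 v) = β := by rw [hb, xor_cancel]
          rw [h3]; simp
        · rw [patO_eq_zero (xor β (s.2.1 v)) i hb]
          simp
      · have h2 : gh n s.1 x ≠ v := by
          intro hc; exact hx (by rw [← hc, gg_gh])
        simp [h2, hx]

----------------- norms and signs -----------------

theorem nrm2E_NE : ∀ n (s : SP n) (v : ENode n), nrm2E n (NE n s v) = nrm2E n v
  | 0, _, v => v.elim
  | n+1, s, Sum.inl v => by simp only [NE, nrm2E, nrm2E_NE n s.1 v]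
  | _+1, s, Sum.inr v => by simp only [NE, nrm2E]

theorem nrm2E_pos : ∀ n (v : ENode n), 0 < nrm2E n v
  | 0, v => v.elim
  | n+1, Sum.inl v => by have := nrm2E_pos n v; simp only [nrm2E]; linarith
  | _+1, Sum.inr v => by simp only [nrm2E]; norm_num

theorem nrm2O_pos : ∀ n (v : ONode n), 0 < nrm2O n v
  | 0, v => v.elim
  | n+1, Sum.inl v => by have := nrm2O_pos n v; simp only [nrm2O]; linarith
  | _+1, Sum.inr v => by simp only [nrm2O]; norm_num

theorem epsE_sq : ∀ n (s : SP n) (v : ENode n), epsE n s v * epsE n s v = 1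
  | 0, _, v => v.elim
  | n+1, s, Sum.inl v => epsE_sq n s.1 v
  | _+1, s, Sum.inr v => bsign_mul_self _

theorem abs_Phi : ∀ n (x : DE n), |Phi n x| ≤ 1
  | 0, _ => by norm_num [Phi]
  | n+1, x => by
      simp only [Phi]
      by_cases h : x.1 = X0 n
      · simp only [h, if_pos rfl]
        have : ∀ i : Fin 4, |pat1 i| ≤ 1 := by intro i; fin_cases i <;> norm_num [pat1]
        exact this x.2
      · simpa [h] using abs_Phi n x.1

----------------- sum helpers -----------------

lemma sum_DE4 (n : ℕ) (F : DE (n+1) → ℝ) :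
    ∑ x, F x = ∑ y : DE n, ∑ i : Fin 4, F (y, i) := Fintype.sum_prod_type _

lemma sum_EN (n : ℕ) (F : ENode (n+1) → ℝ) :
    ∑ v, F v = ∑ v : ENode n, F (Sum.inl v) + ∑ w : DE n, F (Sum.inr w) :=
  Fintype.sum_sum_type _

lemma sum_ON (n : ℕ) (F : ONode (n+1) → ℝ) :
    ∑ v, F v = ∑ v : ONode n, F (Sum.inl v) + ∑ w : DE n × Bool, F (Sum.inr w) :=
  Fintype.sum_sum_type _

lemma sum_neg_invol {α : Type*} [Fintype α] (F : α → ℝ) (ι : α → α)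
    (h1 : ∀ a, ι (ι a) = a) (h2 : ∀ a, F (ι a) = - F a) : ∑ a, F a = 0 := by
  have hbij : Function.Bijective ι := Function.Involutive.bijective h1
  have e1 : ∑ a, F (ι a) = ∑ a, F a := Fintype.sum_bijective ι hbij _ _ (fun a => rfl)
  have e2 : ∑ a, F (ι a) = - ∑ a, F a := by
    rw [← Finset.sum_neg_distrib]; exact Finset.sum_congr rfl (fun a _ => h2 a)
  linarith

----------------- completeness of the Haar system -----------------

instance : Subsingleton (DE 0) := inferInstanceAs (Subsingleton Unit)

lemma fin4_expand (r : Fin 4 → ℝ) (i : Fin 4) :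
    r i = (∑ j, r j)/4 + (∑ j, r j * pat1 j)/4 * pat1 i
      + (∑ j, r j * patO false j)/2 * patO false i
      + (∑ j, r j * patO true j)/2 * patO true i := by
  fin_cases i <;> simp [Fin.sum_univ_four, pat1, patO] <;> ring

theorem complete : ∀ n (w : DE n → ℝ) (x : DE n),
    w x = (∑ y, w y)/4^n
      + (∑ v : ENode n, ip w (χ n v)/nrm2E n v * χ n v x)
      + (∑ u : ONode n, ip w (ψH n u)/nrm2O n u * ψH n u x)
  | 0, w, x => by
      have h1 : (∑ v : ENode 0, ip w (χ 0 v)/nrm2E 0 v * χ 0 v x) = 0 :=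
        Finset.sum_eq_zero (fun v _ => v.elim)
      have h2 : (∑ u : ONode 0, ip w (ψH 0 u)/nrm2O 0 u * ψH 0 u x) = 0 :=
        Finset.sum_eq_zero (fun u _ => u.elim)
      have h3 : ∑ y : DE 0, w y = w x := by
        have huniv : (Finset.univ : Finset (DE 0)) = {x} := by
          apply Finset.eq_singleton_iff_unique_mem.mpr
          exact ⟨Finset.mem_univ x, fun y _ => Subsingleton.elim y x⟩
        rw [huniv, Finset.sum_singleton]
      rw [h1, h2, h3]; norm_num
  | n+1, w, x => by
      obtain ⟨x, i⟩ := x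
      set wb : DE n → ℝ := fun y => (∑ j, w (y, j))/4 with hwb
      have hsum4 : ∀ y, ∑ j, w (y, j) = 4 * wb y := by intro y; rw [hwb]; ring
      have h0 : (∑ y : DE (n+1), w y)/4^(n+1) = (∑ y : DE n, wb y)/4^n := by
        rw [sum_DE4 n w, Finset.sum_congr rfl (fun y _ => hsum4 y), ← Finset.mul_sum,
          pow_succ]
        have : (4:ℝ)^n ≠ 0 := by positivity
        field_simp
      have hEinl : ∀ v : ENode n, ip w (χ (n+1) (Sum.inl v)) = 4 * ip wb (χ n v) := by
        intro v
        show (∑ z : DE (n+1), w z * χ (n+1) (Sum.inl v) z) = _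
        rw [sum_DE4 n (fun z => w z * χ (n+1) (Sum.inl v) z)]
        have hy : ∀ y : DE n, (∑ j : Fin 4, w (y, j) * χ (n+1) (Sum.inl v) (y, j))
             = 4 * (wb y * χ n v y) := by
          intro y
          have hc : ∀ j : Fin 4, χ (n+1) (Sum.inl v) (y, j) = χ n v y := fun _ => rfl
          rw [Finset.sum_congr rfl (fun j _ => by rw [hc j]), ← Finset.sum_mul, hsum4]
          ring
        rw [Finset.sum_congr rfl (fun y _ => hy y), ← Finset.mul_sum]
        rfl
      have hOinl : ∀ u : ONode n, ip w (ψH (n+1) (Sum.inl u)) = 4 * ip wb (ψH n u) := by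
        intro u
        show (∑ z : DE (n+1), w z * ψH (n+1) (Sum.inl u) z) = _
        rw [sum_DE4 n (fun z => w z * ψH (n+1) (Sum.inl u) z)]
        have hy : ∀ y : DE n, (∑ j : Fin 4, w (y, j) * ψH (n+1) (Sum.inl u) (y, j))
             = 4 * (wb y * ψH n u y) := by
          intro y
          have hc : ∀ j : Fin 4, ψH (n+1) (Sum.inl u) (y, j) = ψH n u y := fun _ => rfl
          rw [Finset.sum_congr rfl (fun j _ => by rw [hc j]), ← Finset.sum_mul, hsum4]
          ring
        rw [Finset.sum_congr rfl (fun y _ => hy y), ← Finset.mul_sum]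
        rfl
      have hEinr : ∀ v : DE n, ip w (χ (n+1) (Sum.inr v)) = ∑ j, w (v, j) * pat1 j := by
        intro v
        show (∑ z : DE (n+1), w z * χ (n+1) (Sum.inr v) z) = _
        rw [sum_DE4 n (fun z => w z * χ (n+1) (Sum.inr v) z)]
        have hy : ∀ y : DE n, (∑ j : Fin 4, w (y, j) * χ (n+1) (Sum.inr v) (y, j))
             = if y = v then ∑ j, w (v, j) * pat1 j else 0 := by
          intro y
          have hc : ∀ j : Fin 4, χ (n+1) (Sum.inr v) (y, j) = if y = v then pat1 j else 0 :=
            fun _ => rfl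
          by_cases h : y = v
          · subst h
            simp [hc]
          · simp only [hc, if_neg h, mul_zero, Finset.sum_const_zero]
        rw [Finset.sum_congr rfl (fun y _ => hy y), Finset.sum_ite_eq' Finset.univ v]
        simp
      have hOinr : ∀ z : DE n × Bool,
          ip w (ψH (n+1) (Sum.inr z)) = ∑ j, w (z.1, j) * patO z.2 j := by
        intro z
        show (∑ y : DE (n+1), w y * ψH (n+1) (Sum.inr z) y) = _
        rw [sum_DE4 n (fun y => w y * ψH (n+1) (Sum.inr z) y)]
        have hy : ∀ y : DE n, (∑ j : Fin 4, w (y, j) * ψH (n+1) (Sum.inr z) (y, j))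
             = if y = z.1 then ∑ j, w (z.1, j) * patO z.2 j else 0 := by
          intro y
          have hc : ∀ j : Fin 4, ψH (n+1) (Sum.inr z) (y, j)
              = if y = z.1 then patO z.2 j else 0 := fun _ => rfl
          by_cases h : y = z.1
          · subst h
            simp [hc]
          · simp only [hc, if_neg h, mul_zero, Finset.sum_const_zero]
        rw [Finset.sum_congr rfl (fun y _ => hy y), Finset.sum_ite_eq' Finset.univ z.1]
        simp
      have hIH := complete n wb x
      have hexp := fin4_expand (fun j => w (x, j)) i
      rw [sum_EN n (fun v => ip w (χ (n+1) v)/nrm2E (n+1) v * χ (n+1) v (x, i)),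
        sum_ON n (fun u => ip w (ψH (n+1) u)/nrm2O (n+1) u * ψH (n+1) u (x, i))]
      have e1 : (∑ v : ENode n, ip w (χ (n+1) (Sum.inl v))/nrm2E (n+1) (Sum.inl v)
            * χ (n+1) (Sum.inl v) (x, i))
          = ∑ v : ENode n, ip wb (χ n v)/nrm2E n v * χ n v x := by
        apply Finset.sum_congr rfl; intro v _
        rw [hEinl v]
        have hn : nrm2E (n+1) (Sum.inl v) = 4 * nrm2E n v := rfl
        have hχ : χ (n+1) (Sum.inl v) (x, i) = χ n v x := rfl
        rw [hn, hχ]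
        have hp := nrm2E_pos n v
        field_simp
      have e2 : (∑ u : ONode n, ip w (ψH (n+1) (Sum.inl u))/nrm2O (n+1) (Sum.inl u)
            * ψH (n+1) (Sum.inl u) (x, i))
          = ∑ u : ONode n, ip wb (ψH n u)/nrm2O n u * ψH n u x := by
        apply Finset.sum_congr rfl; intro u _
        rw [hOinl u]
        have hn : nrm2O (n+1) (Sum.inl u) = 4 * nrm2O n u := rfl
        have hψ : ψH (n+1) (Sum.inl u) (x, i) = ψH n u x := rfl
        rw [hn, hψ]
        have hp := nrm2O_pos n u
        field_simp
      have e3 : (∑ v : DE n, ip w (χ (n+1) (Sum.inr v))/nrm2E (n+1) (Sum.inr v)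
            * χ (n+1) (Sum.inr v) (x, i))
          = (∑ j, w (x, j) * pat1 j)/4 * pat1 i := by
        have hc : ∀ v : DE n, χ (n+1) (Sum.inr v) (x, i) = if x = v then pat1 i else 0 :=
          fun _ => rfl
        have : ∀ v : DE n, ip w (χ (n+1) (Sum.inr v))/nrm2E (n+1) (Sum.inr v)
            * χ (n+1) (Sum.inr v) (x, i)
            = if x = v then (∑ j, w (v, j) * pat1 j)/4 * pat1 i else 0 := by
          intro v
          rw [hEinr v, hc v]
          have hn : nrm2E (n+1) (Sum.inr v) = 4 := rfl
          rw [hn]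
          by_cases h : x = v
          · simp [h]
          · simp [h]
        rw [Finset.sum_congr rfl (fun v _ => this v), Finset.sum_ite_eq Finset.univ x]
        simp
      have e4 : (∑ z : DE n × Bool, ip w (ψH (n+1) (Sum.inr z))/nrm2O (n+1) (Sum.inr z)
            * ψH (n+1) (Sum.inr z) (x, i))
          = (∑ j, w (x, j) * patO false j)/2 * patO false i
            + (∑ j, w (x, j) * patO true j)/2 * patO true i := by
        have hc : ∀ z : DE n × Bool, ψH (n+1) (Sum.inr z) (x, i)
            = if x = z.1 then patO z.2 i else 0 := fun _ => rfl
        have hz : ∀ z : DE n × Bool, ip w (ψH (n+1) (Sum.inr z))/nrm2O (n+1) (Sum.inr z)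
            * ψH (n+1) (Sum.inr z) (x, i)
            = if x = z.1 then (∑ j, w (z.1, j) * patO z.2 j)/2 * patO z.2 i else 0 := by
          intro z
          rw [hOinr z, hc z]
          have hn : nrm2O (n+1) (Sum.inr z) = 2 := rfl
          rw [hn]
          by_cases h : x = z.1
          · simp [h]
          · simp [h]
        rw [Finset.sum_congr rfl (fun z _ => hz z)]
        rw [Fintype.sum_prod_type]
        have hv : ∀ v : DE n, (∑ β : Bool, if x = v
              then (∑ j, w (v, j) * patO β j)/2 * patO β i else 0)
            = if x = v then ((∑ j, w (v, j) * patO false j)/2 * patO false i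
              + (∑ j, w (v, j) * patO true j)/2 * patO true i) else 0 := by
          intro v
          by_cases h : x = v
          · simp only [h, if_pos rfl, Fintype.sum_bool, if_true]
            ring
          · simp [h]
        rw [Finset.sum_congr rfl (fun v _ => hv v), Finset.sum_ite_eq Finset.univ x]
        simp
      rw [e1, e2, e3, e4, h0]
      have hq : (∑ j, w (x, j))/4 = wb x := by rw [hsum4]; ring
      rw [hq] at hexp
      linarith [hIH, hexp]

----------------- cycle space lemmas -----------------

lemma mem_cyc {n : ℕ} {f : DE n → ℝ} : f ∈ cycleSpace n ↔ ∀ v : DV n,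
    ∑ e : DE n, f e * ((if (ends n e).2 = v then (1:ℝ) else 0) -
      (if (ends n e).1 = v then (1:ℝ) else 0)) = 0 := Iff.rfl

lemma ends_i0 {n} (e : DE n) :
    ends (n+1) (e, 0) = (Sum.inl (ends n e).1, Sum.inr (e, (0:Fin 2))) := rfl
lemma ends_i1 {n} (e : DE n) :
    ends (n+1) (e, 1) = (Sum.inr (e, (0:Fin 2)), Sum.inl (ends n e).2) := rfl
lemma ends_i2 {n} (e : DE n) :
    ends (n+1) (e, 2) = (Sum.inr (e, (1:Fin 2)), Sum.inl (ends n e).2) := rfl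
lemma ends_i3 {n} (e : DE n) :
    ends (n+1) (e, 3) = (Sum.inl (ends n e).1, Sum.inr (e, (1:Fin 2))) := rfl

lemma inlV_eq {n} (a b : DV n) : (@Eq (DV (n+1)) (Sum.inl a) (Sum.inl b)) ↔ a = b :=
  ⟨fun h => Sum.inl.inj h, fun h => by rw [h]⟩
lemma inrV_eq {n} (a b : DE n × Fin 2) : (@Eq (DV (n+1)) (Sum.inr a) (Sum.inr b)) ↔ a = b :=
  ⟨fun h => Sum.inr.inj h, fun h => by rw [h]⟩
lemma inlV_ne {n} (a : DV n) (b : DE n × Fin 2) : (@Eq (DV (n+1)) (Sum.inl a) (Sum.inr b)) ↔ False :=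
  ⟨fun h => Sum.inl_ne_inr h, False.elim⟩
lemma inrV_ne {n} (a : DE n × Fin 2) (b : DV n) : (@Eq (DV (n+1)) (Sum.inr a) (Sum.inl b)) ↔ False :=
  ⟨fun h => Sum.inr_ne_inl h, False.elim⟩
lemma f2a : ¬((1:Fin 2) = 0) := by decide
lemma f2b : ¬((0:Fin 2) = 1) := by decide

lemma p1v0 : pat1 0 = 1 := rfl
lemma p1v1 : pat1 1 = 1 := rfl
lemma p1v2 : pat1 2 = -1 := rfl
lemma p1v3 : pat1 3 = -1 := rfl
lemma pfv0 : patO false 0 = 1 := rfl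
lemma pfv1 : patO false 1 = -1 := rfl
lemma pfv2 : patO false 2 = 0 := rfl
lemma pfv3 : patO false 3 = 0 := rfl
lemma ptv0 : patO true 0 = 0 := rfl
lemma ptv1 : patO true 1 = 0 := rfl
lemma ptv2 : patO true 2 = 1 := rfl
lemma ptv3 : patO true 3 = -1 := rfl

def zbar {n : ℕ} (z : DE (n+1) → ℝ) : DE n → ℝ := fun e => z (e, 1) + z (e, 2)

lemma cons_a {n} {z : DE (n+1) → ℝ} (hz : z ∈ cycleSpace (n+1)) (e : DE n) :
    z (e, 0) = z (e, 1) := by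
  have h := mem_cyc.mp hz (Sum.inr (e, (0:Fin 2)))
  rw [sum_DE4 n (fun e' => z e' * ((if (ends (n+1) e').2 = Sum.inr (e, (0:Fin 2)) then (1:ℝ) else 0) -
      (if (ends (n+1) e').1 = Sum.inr (e, (0:Fin 2)) then (1:ℝ) else 0)))] at h
  have key : ∀ e' : DE n, (∑ i : Fin 4, z (e', i) *
      ((if (ends (n+1) (e', i)).2 = Sum.inr (e, (0:Fin 2)) then (1:ℝ) else 0) -
       (if (ends (n+1) (e', i)).1 = Sum.inr (e, (0:Fin 2)) then (1:ℝ) else 0)))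
      = if e' = e then z (e', 0) - z (e', 1) else 0 := by
    intro e'
    rw [Fin.sum_univ_four, ends_i0 e', ends_i1 e', ends_i2 e', ends_i3 e']
    by_cases he : e' = e <;>
      simp [he, inlV_ne, inrV_ne, inrV_eq, Prod.ext_iff, f2a, f2b] <;> ring
  rw [Finset.sum_congr rfl (fun e' _ => key e'), Finset.sum_ite_eq' Finset.univ e] at h
  simp at h
  linarith

lemma cons_b {n} {z : DE (n+1) → ℝ} (hz : z ∈ cycleSpace (n+1)) (e : DE n) :
    z (e, 2) = z (e, 3) := by
  have h := mem_cyc.mp hz (Sum.inr (e, (1:Fin 2)))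
  rw [sum_DE4 n (fun e' => z e' * ((if (ends (n+1) e').2 = Sum.inr (e, (1:Fin 2)) then (1:ℝ) else 0) -
      (if (ends (n+1) e').1 = Sum.inr (e, (1:Fin 2)) then (1:ℝ) else 0)))] at h
  have key : ∀ e' : DE n, (∑ i : Fin 4, z (e', i) *
      ((if (ends (n+1) (e', i)).2 = Sum.inr (e, (1:Fin 2)) then (1:ℝ) else 0) -
       (if (ends (n+1) (e', i)).1 = Sum.inr (e, (1:Fin 2)) then (1:ℝ) else 0)))
      = if e' = e then z (e', 3) - z (e', 2) else 0 := by
    intro e'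
    rw [Fin.sum_univ_four, ends_i0 e', ends_i1 e', ends_i2 e', ends_i3 e']
    by_cases he : e' = e <;>
      simp [he, inlV_ne, inrV_ne, inrV_eq, Prod.ext_iff, f2a, f2b] <;> ring
  rw [Finset.sum_congr rfl (fun e' _ => key e'), Finset.sum_ite_eq' Finset.univ e] at h
  simp at h
  linarith

lemma cons_c {n} {z : DE (n+1) → ℝ} (hz : z ∈ cycleSpace (n+1)) :
    zbar z ∈ cycleSpace n := by
  rw [mem_cyc]
  intro w
  have h := mem_cyc.mp hz (Sum.inl w)
  rw [sum_DE4 n (fun e' => z e' * ((if (ends (n+1) e').2 = Sum.inl w then (1:ℝ) else 0) -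
      (if (ends (n+1) e').1 = Sum.inl w then (1:ℝ) else 0)))] at h
  have key : ∀ e' : DE n, (∑ i : Fin 4, z (e', i) *
      ((if (ends (n+1) (e', i)).2 = Sum.inl w then (1:ℝ) else 0) -
       (if (ends (n+1) (e', i)).1 = Sum.inl w then (1:ℝ) else 0)))
      = zbar z e' * ((if (ends n e').2 = w then (1:ℝ) else 0) -
       (if (ends n e').1 = w then (1:ℝ) else 0)) := by
    intro e'
    rw [Fin.sum_univ_four, ends_i0 e', ends_i1 e', ends_i2 e', ends_i3 e',
      cons_a hz e', ← cons_b hz e']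
    by_cases c1 : (ends n e').1 = w <;> by_cases c2 : (ends n e').2 = w <;>
      simp [c1, c2, inlV_eq, inrV_ne, zbar] <;> ring
  rw [Finset.sum_congr rfl (fun e' _ => key e')] at h
  exact h

theorem cyc_facts : ∀ n (z : DE n → ℝ), z ∈ cycleSpace n →
    ((∑ x, z x) = 0 ∧ (∀ u : ONode n, ip z (ψH n u) = 0))
  | 0, z, hz => by
      constructor
      · have h := mem_cyc.mp hz ((1 : Fin 2) : DV 0)
        have he : ∀ e : DE 0, ((if (ends 0 e).2 = ((1 : Fin 2) : DV 0) then (1:ℝ) else 0) -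
            (if (ends 0 e).1 = ((1 : Fin 2) : DV 0) then (1:ℝ) else 0)) = 1 := by
          intro e
          have h1 : ends 0 e = ((0:Fin 2), (1:Fin 2)) := rfl
          have hh : ¬(((0:Fin 2) : DV 0) = ((1:Fin 2) : DV 0)) := by decide
          rw [if_pos (show (ends 0 e).2 = ((1:Fin 2) : DV 0) from rfl),
            if_neg (show ¬ (ends 0 e).1 = ((1:Fin 2) : DV 0) from hh)]; norm_num
        calc (∑ x, z x)
            = ∑ x, z x * ((if (ends 0 x).2 = ((1 : Fin 2) : DV 0) then (1:ℝ) else 0) -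
              (if (ends 0 x).1 = ((1 : Fin 2) : DV 0) then (1:ℝ) else 0)) := by
              apply Finset.sum_congr rfl; intro x _; rw [he x]; ring
          _ = 0 := h
      · intro u; exact u.elim
  | n+1, z, hz => by
      have hzb := cons_c hz
      have IH := cyc_facts n (zbar z) hzb
      have hsum2 : ∀ x, (∑ i : Fin 4, z (x, i)) = 2 * zbar z x := by
        intro x
        rw [Fin.sum_univ_four, cons_a hz x, ← cons_b hz x]
        simp only [zbar]
        ring
      constructor
      · rw [sum_DE4 n z, Finset.sum_congr rfl (fun x _ => hsum2 x), ← Finset.mul_sum,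
          IH.1, mul_zero]
      · intro u
        match u with
        | Sum.inl u =>
          have hh : ip z (ψH (n+1) (Sum.inl u)) = 2 * ip (zbar z) (ψH n u) := by
            show (∑ x : DE (n+1), z x * ψH (n+1) (Sum.inl u) x) = _
            rw [sum_DE4 n (fun x => z x * ψH (n+1) (Sum.inl u) x)]
            have hy : ∀ y : DE n, (∑ j : Fin 4, z (y, j) * ψH (n+1) (Sum.inl u) (y, j))
                = 2 * (zbar z y * ψH n u y) := by
              intro y
              have hc : ∀ j : Fin 4, ψH (n+1) (Sum.inl u) (y, j) = ψH n u y := fun _ => rfl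
              rw [Finset.sum_congr rfl (fun j _ => by rw [hc j]), ← Finset.sum_mul, hsum2]
              ring
            rw [Finset.sum_congr rfl (fun y _ => hy y), ← Finset.mul_sum]
            rfl
          rw [hh, IH.2 u, mul_zero]
        | Sum.inr zn =>
          have hcol : ip z (ψH (n+1) (Sum.inr zn)) = ∑ j, z (zn.1, j) * patO zn.2 j := by
            show (∑ y : DE (n+1), z y * ψH (n+1) (Sum.inr zn) y) = _
            rw [sum_DE4 n (fun y => z y * ψH (n+1) (Sum.inr zn) y)]
            have hy : ∀ y : DE n, (∑ j : Fin 4, z (y, j) * ψH (n+1) (Sum.inr zn) (y, j))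
                = if y = zn.1 then ∑ j, z (zn.1, j) * patO zn.2 j else 0 := by
              intro y
              have hc : ∀ j : Fin 4, ψH (n+1) (Sum.inr zn) (y, j)
                  = if y = zn.1 then patO zn.2 j else 0 := fun _ => rfl
              by_cases h : y = zn.1
              · subst h
                simp [hc]
              · simp only [hc, if_neg h, mul_zero, Finset.sum_const_zero]
            rw [Finset.sum_congr rfl (fun y _ => hy y), Finset.sum_ite_eq' Finset.univ zn.1]
            simp
          rw [hcol]
          obtain ⟨v, β⟩ := zn
          cases β
          · rw [Fin.sum_univ_four]
            have ha := cons_a hz v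
            simp only [pfv0, pfv1, pfv2, pfv3]
            linarith
          · rw [Fin.sum_univ_four]
            have hb := cons_b hz v
            simp only [ptv0, ptv1, ptv2, ptv3]
            linarith

----------------- even Haar functions are circulations -----------------

lemma subdiv_mem {n} {z : DE n → ℝ} (hz : z ∈ cycleSpace n) :
    (fun x : DE (n+1) => z x.1) ∈ cycleSpace (n+1) := by
  rw [mem_cyc]
  intro v
  match v with
  | Sum.inl w =>
    rw [sum_DE4 n (fun e' => z e'.1 * ((if (ends (n+1) e').2 = Sum.inl w then (1:ℝ) else 0) -
        (if (ends (n+1) e').1 = Sum.inl w then (1:ℝ) else 0)))]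
    have key : ∀ e' : DE n, (∑ i : Fin 4, z (e', i).1 *
        ((if (ends (n+1) (e', i)).2 = Sum.inl w then (1:ℝ) else 0) -
         (if (ends (n+1) (e', i)).1 = Sum.inl w then (1:ℝ) else 0)))
        = 2 * (z e' * ((if (ends n e').2 = w then (1:ℝ) else 0) -
         (if (ends n e').1 = w then (1:ℝ) else 0))) := by
      intro e'
      rw [Fin.sum_univ_four, ends_i0 e', ends_i1 e', ends_i2 e', ends_i3 e']
      by_cases c1 : (ends n e').1 = w <;> by_cases c2 : (ends n e').2 = w <;>
        simp [c1, c2, inlV_eq, inrV_ne] <;> ring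
    rw [Finset.sum_congr rfl (fun e' _ => key e'), ← Finset.mul_sum, mem_cyc.mp hz w,
      mul_zero]
  | Sum.inr p =>
    obtain ⟨e, j⟩ := p
    rw [sum_DE4 n (fun e' => z e'.1 * ((if (ends (n+1) e').2 = Sum.inr (e, j) then (1:ℝ) else 0) -
        (if (ends (n+1) e').1 = Sum.inr (e, j) then (1:ℝ) else 0)))]
    apply Finset.sum_eq_zero
    intro e' _
    rw [Fin.sum_univ_four, ends_i0 e', ends_i1 e', ends_i2 e', ends_i3 e']
    fin_cases j <;> by_cases he : e' = e <;>
      simp [he, inlV_ne, inrV_ne, inrV_eq, Prod.ext_iff, f2a, f2b] <;> ring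

lemma quad_mem {n} (v : DE n) : χ (n+1) (Sum.inr v) ∈ cycleSpace (n+1) := by
  rw [mem_cyc]
  intro w
  match w with
  | Sum.inl w =>
    rw [sum_DE4 n (fun e' => χ (n+1) (Sum.inr v) e' *
        ((if (ends (n+1) e').2 = Sum.inl w then (1:ℝ) else 0) -
         (if (ends (n+1) e').1 = Sum.inl w then (1:ℝ) else 0)))]
    apply Finset.sum_eq_zero
    intro e' _
    have hc : ∀ j : Fin 4, χ (n+1) (Sum.inr v) (e', j) = if e' = v then pat1 j else 0 :=
      fun _ => rfl
    rw [Fin.sum_univ_four, ends_i0 e', ends_i1 e', ends_i2 e', ends_i3 e']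
    simp only [hc, p1v0, p1v1, p1v2, p1v3]
    by_cases he : e' = v
    · subst he
      by_cases c1 : (ends n e').1 = w <;> by_cases c2 : (ends n e').2 = w <;>
        simp [c1, c2, inlV_eq, inrV_ne] <;> ring
    · simp [he, inlV_eq, inrV_ne]
  | Sum.inr p =>
    obtain ⟨e, j⟩ := p
    rw [sum_DE4 n (fun e' => χ (n+1) (Sum.inr v) e' *
        ((if (ends (n+1) e').2 = Sum.inr (e, j) then (1:ℝ) else 0) -
         (if (ends (n+1) e').1 = Sum.inr (e, j) then (1:ℝ) else 0)))]
    apply Finset.sum_eq_zero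
    intro e' _
    have hc : ∀ i : Fin 4, χ (n+1) (Sum.inr v) (e', i) = if e' = v then pat1 i else 0 :=
      fun _ => rfl
    rw [Fin.sum_univ_four, ends_i0 e', ends_i1 e', ends_i2 e', ends_i3 e']
    simp only [hc, p1v0, p1v1, p1v2, p1v3]
    fin_cases j <;> by_cases he : e' = e <;> by_cases hv : e' = v <;>
      simp [he, hv, inlV_ne, inrV_ne, inrV_eq, Prod.ext_iff, f2a, f2b] <;> ring

theorem chi_mem : ∀ n (v : ENode n), χ n v ∈ cycleSpace n
  | 0, v => v.elim
  | n+1, Sum.inl v => subdiv_mem (chi_mem n v)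
  | n+1, Sum.inr v => quad_mem v

----------------- cancellation involutions -----------------

lemma bsign_not (b : Bool) : bsign (!b) = - bsign b := by cases b <;> norm_num [bsign]

lemma upd_flip {α : Type*} [DecidableEq α] (f : α → Bool) (a : α) :
    Function.update (Function.update f a (!(f a))) a
      (!(Function.update f a (!(f a)) a)) = f := by
  rw [Function.update_self, Function.update_idem, Bool.not_not, Function.update_eq_self]

def iE : ∀ n, ENode n → SP n → SP n
  | 0, v, _ => v.elim
  | n+1, Sum.inl v, s => (iE n v s.1, s.2.1, s.2.2)
  | n+1, Sum.inr v, s => (s.1, Function.update s.2.1 v (!(s.2.1 v)), s.2.2)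

theorem iE_invol : ∀ n (v : ENode n) (s : SP n), iE n v (iE n v s) = s
  | 0, v, _ => v.elim
  | n+1, Sum.inl v, s => by
      simp only [iE, iE_invol n v s.1]
      rfl
  | n+1, Sum.inr v, s => by
      simp only [iE, upd_flip]
      rfl

theorem NE_iE : ∀ n (v : ENode n) (s : SP n), NE n (iE n v s) v = NE n s v
  | 0, v, _ => v.elim
  | n+1, Sum.inl v, s => by simp only [iE, NE, NE_iE n v s.1]; rfl
  | n+1, Sum.inr _, _ => rfl

theorem epsE_iE : ∀ n (v : ENode n) (s : SP n), epsE n (iE n v s) v = - epsE n s v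
  | 0, v, _ => v.elim
  | n+1, Sum.inl v, s => epsE_iE n v s.1
  | n+1, Sum.inr v, s => by
      simp only [iE, epsE, Function.update_self, bsign_not]

def iEO : ∀ n, ENode n → ONode n → SP n → SP n
  | 0, v, _, _ => v.elim
  | n+1, Sum.inl v, Sum.inl u, s => (iEO n v u s.1, s.2.1, s.2.2)
  | n+1, Sum.inl _, Sum.inr w, s => (s.1, s.2.1, Function.update s.2.2 w (!(s.2.2 w)))
  | n+1, Sum.inr v, Sum.inl _, s => (s.1, Function.update s.2.1 v (!(s.2.1 v)), s.2.2)
  | n+1, Sum.inr v, Sum.inr w, s =>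
      if w.1 = v then (s.1, s.2.1, Function.update s.2.2 w (!(s.2.2 w)))
      else (s.1, Function.update s.2.1 v (!(s.2.1 v)), s.2.2)

lemma iEO_pos {n : ℕ} {v : DE n} {w : DE n × Bool} (s : SP (n+1)) (hw : w.1 = v) :
    iEO (n+1) (Sum.inr v) (Sum.inr w) s = (s.1, s.2.1, Function.update s.2.2 w (!(s.2.2 w))) :=
  if_pos hw
lemma iEO_neg {n : ℕ} {v : DE n} {w : DE n × Bool} (s : SP (n+1)) (hw : ¬ w.1 = v) :
    iEO (n+1) (Sum.inr v) (Sum.inr w) s = (s.1, Function.update s.2.1 v (!(s.2.1 v)), s.2.2) :=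
  if_neg hw

theorem iEO_invol : ∀ n (v : ENode n) (u : ONode n) (s : SP n), iEO n v u (iEO n v u s) = s
  | 0, v, _, _ => v.elim
  | n+1, Sum.inl v, Sum.inl u, s => by
      simp only [iEO, iEO_invol n v u s.1]
      rfl
  | n+1, Sum.inl v, Sum.inr w, s => by
      simp only [iEO, upd_flip]
      rfl
  | n+1, Sum.inr v, Sum.inl u, s => by
      simp only [iEO, upd_flip]
      rfl
  | n+1, Sum.inr v, Sum.inr w, s => by
      by_cases hw : w.1 = v
      · rw [iEO_pos _ hw, iEO_pos _ hw]; simp only [upd_flip]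
        rfl
      · rw [iEO_neg _ hw, iEO_neg _ hw]; simp only [upd_flip]
        rfl

theorem NE_iEO : ∀ n (v : ENode n) (u : ONode n) (s : SP n),
    NE n (iEO n v u s) v = NE n s v
  | 0, v, _, _ => v.elim
  | n+1, Sum.inl v, Sum.inl u, s => by
      simp only [iEO, NE, NE_iEO n v u s.1]; rfl
  | n+1, Sum.inl _, Sum.inr _, _ => rfl
  | n+1, Sum.inr _, Sum.inl _, _ => rfl
  | n+1, Sum.inr v, Sum.inr w, s => by
      by_cases hw : w.1 = v
      · rw [iEO_pos _ hw]; rfl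
      · rw [iEO_neg _ hw]; rfl

theorem NO_iEO : ∀ n (v : ENode n) (u : ONode n) (s : SP n),
    NO n (iEO n v u s) u = NO n s u
  | 0, v, _, _ => v.elim
  | n+1, Sum.inl v, Sum.inl u, s => by
      simp only [iEO, NO, NO_iEO n v u s.1]; rfl
  | n+1, Sum.inl _, Sum.inr _, _ => rfl
  | n+1, Sum.inr _, Sum.inl _, _ => rfl
  | n+1, Sum.inr v, Sum.inr w, s => by
      by_cases hw : w.1 = v
      · rw [iEO_pos _ hw]; rfl
      · rw [iEO_neg _ hw]
        exact congrArg (fun b => (Sum.inr (gg n s.1 w.1, xor w.2 b) : ONode (n+1)))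
          (Function.update_of_ne hw (!(s.2.1 v)) s.2.1)

theorem eps_iEO : ∀ n (v : ENode n) (u : ONode n) (s : SP n),
    epsE n (iEO n v u s) v * epsO n (iEO n v u s) u = -(epsE n s v * epsO n s u)
  | 0, v, _, _ => v.elim
  | n+1, Sum.inl v, Sum.inl u, s => eps_iEO n v u s.1
  | n+1, Sum.inl v, Sum.inr w, s => by
      simp only [iEO, epsE, epsO, Function.update_self, bsign_not]
      ring
  | n+1, Sum.inr v, Sum.inl u, s => by
      simp only [iEO, epsE, epsO, Function.update_self, bsign_not]
      ring
  | n+1, Sum.inr v, Sum.inr w, s => by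
      by_cases hw : w.1 = v
      · rw [iEO_pos _ hw]; simp only [epsE, epsO, Function.update_self, bsign_not]
        ring
      · rw [iEO_neg _ hw]; simp only [epsE, epsO, Function.update_self, bsign_not]
        ring

----------------- cancellation sums -----------------

lemma sumE_zero (n : ℕ) (v : ENode n) (G : ENode n → ℝ) :
    ∑ s : SP n, epsE n s v * G (NE n s v) = 0 := by
  apply sum_neg_invol _ (iE n v) (iE_invol n v)
  intro s
  rw [epsE_iE, NE_iE]
  ring

lemma sumEO_zero (n : ℕ) (v : ENode n) (u : ONode n) (A : ENode n → ℝ) (B : ONode n → ℝ) :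
    ∑ s : SP n, epsE n s v * A (NE n s v) * (epsO n s u * B (NO n s u)) = 0 := by
  apply sum_neg_invol _ (iEO n v u) (iEO_invol n v u)
  intro s
  rw [NE_iEO, NO_iEO]
  have h := eps_iEO n v u s
  calc epsE n (iEO n v u s) v * A (NE n s v) * (epsO n (iEO n v u s) u * B (NO n s u))
      = (epsE n (iEO n v u s) v * epsO n (iEO n v u s) u)
          * (A (NE n s v) * B (NO n s u)) := by ring
    _ = -(epsE n s v * epsO n s u) * (A (NE n s v) * B (NO n s u)) := by rw [h]
    _ = -(epsE n s v * A (NE n s v) * (epsO n s u * B (NO n s u))) := by ring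

----------------- the main-term computation -----------------

lemma sum_pat1 : ∑ i : Fin 4, pat1 i = 0 := by
  rw [Fin.sum_univ_four, p1v0, p1v1, p1v2, p1v3]; norm_num

lemma sum_pat1_sq : ∑ i : Fin 4, pat1 i * pat1 i = 4 := by
  rw [Fin.sum_univ_four, p1v0, p1v1, p1v2, p1v3]; norm_num

lemma Phi_X0 : ∀ n, Phi n (X0 n) = 1
  | 0 => rfl
  | n+1 => by simp [Phi, X0, p1v0]

lemma ip_Phi_inl (n : ℕ) (v : ENode n) :
    ip (Phi (n+1)) (χ (n+1) (Sum.inl v)) = 4 * ip (Phi n) (χ n v) - 4 * χ n v (X0 n) := by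
  show (∑ z : DE (n+1), Phi (n+1) z * χ (n+1) (Sum.inl v) z) = _
  rw [sum_DE4 n (fun z => Phi (n+1) z * χ (n+1) (Sum.inl v) z)]
  have hy : ∀ y : DE n, (∑ i : Fin 4, Phi (n+1) (y, i) * χ (n+1) (Sum.inl v) (y, i))
      = 4 * (Phi n y * χ n v y) - 4 * ((if y = X0 n then (1:ℝ) else 0) * χ n v y) := by
    intro y
    have hc : ∀ i : Fin 4, χ (n+1) (Sum.inl v) (y, i) = χ n v y := fun _ => rfl
    have hp : ∀ i : Fin 4, Phi (n+1) (y, i) = if y = X0 n then pat1 i else Phi n y :=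
      fun _ => rfl
    by_cases h : y = X0 n
    · simp only [hc, hp, if_pos h]
      rw [← Finset.sum_mul, sum_pat1, h, Phi_X0]
      ring
    · simp only [hc, hp, if_neg h]
      rw [Fin.sum_univ_four]
      ring
  rw [Finset.sum_congr rfl (fun y _ => hy y), Finset.sum_sub_distrib]
  have h1 : ∑ y : DE n, 4 * (Phi n y * χ n v y) = 4 * ip (Phi n) (χ n v) := by
    rw [← Finset.mul_sum]; rfl
  have h2 : ∑ y : DE n, 4 * ((if y = X0 n then (1:ℝ) else 0) * χ n v y)
      = 4 * χ n v (X0 n) := by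
    rw [← Finset.mul_sum]
    congr 1
    have hy2 : ∀ y, (if y = X0 n then (1:ℝ) else 0) * χ n v y
        = if y = X0 n then χ n v y else 0 := by
      intro y; by_cases h : y = X0 n <;> simp [h]
    rw [Finset.sum_congr rfl (fun y _ => hy2 y), Finset.sum_ite_eq' Finset.univ (X0 n)]
    simp
  rw [h1, h2]

lemma ip_Phi_inr (n : ℕ) (v : DE n) :
    ip (Phi (n+1)) (χ (n+1) (Sum.inr v)) = if v = X0 n then 4 else 0 := by
  show (∑ z : DE (n+1), Phi (n+1) z * χ (n+1) (Sum.inr v) z) = _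
  rw [sum_DE4 n (fun z => Phi (n+1) z * χ (n+1) (Sum.inr v) z)]
  have hy : ∀ y : DE n, (∑ i : Fin 4, Phi (n+1) (y, i) * χ (n+1) (Sum.inr v) (y, i))
      = if y = v then (∑ i, Phi (n+1) (v, i) * pat1 i) else 0 := by
    intro y
    have hc : ∀ i : Fin 4, χ (n+1) (Sum.inr v) (y, i) = if y = v then pat1 i else 0 :=
      fun _ => rfl
    by_cases h : y = v
    · subst h; simp [hc]
    · simp only [hc, if_neg h, mul_zero, Finset.sum_const_zero]
  rw [Finset.sum_congr rfl (fun y _ => hy y), Finset.sum_ite_eq' Finset.univ v]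
  simp only [Finset.mem_univ, if_true]
  have hp : ∀ i : Fin 4, Phi (n+1) (v, i) = if v = X0 n then pat1 i else Phi n v :=
    fun _ => rfl
  by_cases h : v = X0 n
  · rw [if_pos h]
    have hq : ∀ i : Fin 4, Phi (n+1) (v, i) = pat1 i := by
      intro i; rw [hp i, if_pos h]
    rw [Finset.sum_congr rfl (fun i _ => by rw [hq i])]
    exact sum_pat1_sq
  · simp only [hp, if_neg h]
    rw [← Finset.mul_sum, sum_pat1, mul_zero]

noncomputable def PiVal (n : ℕ) : ℝ := ∑ v : ENode n, ip (Phi n) (χ n v) / nrm2E n v * χ n v (X0 n)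
noncomputable def RVal (n : ℕ) : ℝ := ∑ v : ENode n, (χ n v (X0 n)) * (χ n v (X0 n)) / nrm2E n v

lemma chi_X0_inl (n : ℕ) (v : ENode n) :
    χ (n+1) (Sum.inl v) (X0 (n+1)) = χ n v (X0 n) := rfl

lemma chi_X0_inr (n : ℕ) (v : DE n) :
    χ (n+1) (Sum.inr v) (X0 (n+1)) = if X0 n = v then 1 else 0 := by
  show (if X0 n = v then pat1 0 else 0) = _
  rw [p1v0]

lemma RVal_succ (n : ℕ) : RVal (n+1) = RVal n / 4 + 1/4 := by
  show (∑ v : ENode (n+1), (χ (n+1) v (X0 (n+1))) * (χ (n+1) v (X0 (n+1))) / nrm2E (n+1) v) = _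
  rw [sum_EN n (fun v => (χ (n+1) v (X0 (n+1))) * (χ (n+1) v (X0 (n+1))) / nrm2E (n+1) v)]
  have e1 : (∑ v : ENode n, (χ (n+1) (Sum.inl v) (X0 (n+1))) * (χ (n+1) (Sum.inl v) (X0 (n+1)))
        / nrm2E (n+1) (Sum.inl v)) = RVal n / 4 := by
    rw [show RVal n / 4 = ∑ v : ENode n,
      ((χ n v (X0 n)) * (χ n v (X0 n)) / nrm2E n v) / 4 from by
        rw [← Finset.sum_div]; rfl]
    apply Finset.sum_congr rfl
    intro v _
    rw [chi_X0_inl]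
    have hn : nrm2E (n+1) (Sum.inl v) = 4 * nrm2E n v := rfl
    rw [hn]
    rw [div_div, mul_comm (nrm2E n v) 4]
  have e2 : (∑ v : DE n, (χ (n+1) (Sum.inr v) (X0 (n+1))) * (χ (n+1) (Sum.inr v) (X0 (n+1)))
        / nrm2E (n+1) (Sum.inr v)) = 1/4 := by
    have hv : ∀ v : DE n, (χ (n+1) (Sum.inr v) (X0 (n+1))) * (χ (n+1) (Sum.inr v) (X0 (n+1)))
        / nrm2E (n+1) (Sum.inr v) = if X0 n = v then 1/4 else 0 := by
      intro v
      rw [chi_X0_inr]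
      have hn : nrm2E (n+1) (Sum.inr v) = 4 := rfl
      rw [hn]
      by_cases h : X0 n = v <;> simp [h] <;> norm_num
    rw [Finset.sum_congr rfl (fun v _ => hv v), Finset.sum_ite_eq Finset.univ (X0 n)]
    simp
  rw [e1, e2]

lemma RVal_val : ∀ n, RVal n = (1 - (1/4)^n)/3
  | 0 => by
      have h : RVal 0 = 0 := Finset.sum_eq_zero (fun v _ => v.elim)
      rw [h]; norm_num
  | n+1 => by
      rw [RVal_succ n, RVal_val n]
      rw [pow_succ]
      ring

lemma PiVal_succ (n : ℕ) : PiVal (n+1) = PiVal n - RVal n + 1 := by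
  show (∑ v : ENode (n+1), ip (Phi (n+1)) (χ (n+1) v) / nrm2E (n+1) v * χ (n+1) v (X0 (n+1))) = _
  rw [sum_EN n (fun v => ip (Phi (n+1)) (χ (n+1) v) / nrm2E (n+1) v * χ (n+1) v (X0 (n+1)))]
  have e1 : (∑ v : ENode n, ip (Phi (n+1)) (χ (n+1) (Sum.inl v)) / nrm2E (n+1) (Sum.inl v)
        * χ (n+1) (Sum.inl v) (X0 (n+1)))
      = PiVal n - RVal n := by
    rw [show PiVal n - RVal n = ∑ v : ENode n, (ip (Phi n) (χ n v) / nrm2E n v * χ n v (X0 n)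
      - (χ n v (X0 n)) * (χ n v (X0 n)) / nrm2E n v) from by
        rw [Finset.sum_sub_distrib]; rfl]
    apply Finset.sum_congr rfl
    intro v _
    rw [ip_Phi_inl, chi_X0_inl]
    have hn : nrm2E (n+1) (Sum.inl v) = 4 * nrm2E n v := rfl
    rw [hn]
    have := nrm2E_pos n v
    field_simp
  have e2 : (∑ v : DE n, ip (Phi (n+1)) (χ (n+1) (Sum.inr v)) / nrm2E (n+1) (Sum.inr v)
        * χ (n+1) (Sum.inr v) (X0 (n+1))) = 1 := by
    have hv : ∀ v : DE n, ip (Phi (n+1)) (χ (n+1) (Sum.inr v)) / nrm2E (n+1) (Sum.inr v)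
        * χ (n+1) (Sum.inr v) (X0 (n+1)) = if X0 n = v then 1 else 0 := by
      intro v
      rw [ip_Phi_inr, chi_X0_inr]
      have hn : nrm2E (n+1) (Sum.inr v) = 4 := rfl
      rw [hn]
      by_cases h : X0 n = v
      · have h2 : v = X0 n := h.symm
        simp only [if_pos h, if_pos h2]
        norm_num
      · have h2 : ¬ v = X0 n := fun hc => h hc.symm
        simp only [if_neg h, if_neg h2]
        norm_num
    rw [Finset.sum_congr rfl (fun v _ => hv v), Finset.sum_ite_eq Finset.univ (X0 n)]
    simp
  rw [e1, e2]

lemma PiVal_val : ∀ n, PiVal n = 2*n/3 + 4/9 - (4/9)*(1/4)^n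
  | 0 => by
      have h : PiVal 0 = 0 := Finset.sum_eq_zero (fun v _ => v.elim)
      rw [h]; norm_num
  | n+1 => by
      rw [PiVal_succ n, PiVal_val n, RVal_val n, pow_succ]
      push_cast
      ring

----------------- assembly lemmas -----------------

lemma ip_comm {n : ℕ} (f g : DE n → ℝ) : ip f g = ip g f :=
  Finset.sum_congr rfl (fun x _ => mul_comm _ _)

noncomputable def dl {n : ℕ} (y : DE n) : DE n → ℝ := fun e => if e = y then 1 else 0

lemma e1norm_dl {n : ℕ} (y : DE n) : e1norm (dl y) = 1 := by
  show (∑ e, |dl y e|) = 1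
  have h : ∀ e : DE n, |dl y e| = if e = y then 1 else 0 := by
    intro e; simp only [dl]; by_cases h : e = y <;> simp [h]
  rw [Finset.sum_congr rfl (fun e _ => h e), Finset.sum_ite_eq' Finset.univ y]
  simp

lemma dl_decomp {n : ℕ} (w : DE n → ℝ) : w = ∑ y, w y • dl y := by
  funext e
  rw [Finset.sum_apply]
  simp only [Pi.smul_apply, smul_eq_mul, dl]
  have h : ∀ y, w y * (if e = y then (1:ℝ) else 0) = if e = y then w y else 0 := fun y => by
    by_cases h : e = y <;> simp [h]
  rw [Finset.sum_congr rfl (fun y _ => h y), Finset.sum_ite_eq Finset.univ e]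
  simp

lemma ip_sum_smul {n : ℕ} (f : DE n → ℝ) (c : DE n → ℝ) (g : DE n → (DE n → ℝ)) :
    ip f (∑ y, c y • g y) = ∑ y, c y * ip f (g y) := by
  show (∑ x, f x * (∑ y, c y • g y) x) = _
  calc (∑ x, f x * (∑ y, c y • g y) x)
      = ∑ x, ∑ y, c y * (f x * g y x) := by
        apply Finset.sum_congr rfl; intro x _
        rw [Finset.sum_apply, Finset.mul_sum]
        apply Finset.sum_congr rfl; intro y _
        simp only [Pi.smul_apply, smul_eq_mul]
        ring
    _ = ∑ y, ∑ x, c y * (f x * g y x) := Finset.sum_comm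
    _ = ∑ y, c y * ip f (g y) := by
        apply Finset.sum_congr rfl; intro y _
        rw [← Finset.mul_sum]
        rfl

noncomputable def Jv {n : ℕ} (P : (DE n → ℝ) →ₗ[ℝ] (DE n → ℝ)) (v : ENode n) :
    DE n → ℝ := fun y => ip (χ n v) (P (dl y)) - χ n v y

noncomputable def C0 {n : ℕ} (P : (DE n → ℝ) →ₗ[ℝ] (DE n → ℝ)) (v : ENode n) : ℝ :=
  (∑ y, Jv P v y)/4^n

noncomputable def Dc {n : ℕ} (P : (DE n → ℝ) →ₗ[ℝ] (DE n → ℝ)) (v : ENode n)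
    (u : ONode n) : ℝ := ip (Jv P v) (ψH n u) / nrm2O n u

lemma J_orth {n : ℕ} (P : (DE n → ℝ) →ₗ[ℝ] (DE n → ℝ))
    (hP2 : ∀ f ∈ cycleSpace n, P f = f) (v u' : ENode n) :
    ip (Jv P v) (χ n u') = 0 := by
  have h1 : ip (χ n v) (P (χ n u')) = ∑ y, χ n u' y * ip (χ n v) (P (dl y)) := by
    conv_lhs => rw [dl_decomp (χ n u')]
    rw [map_sum]
    rw [Finset.sum_congr rfl (fun y (_ : y ∈ Finset.univ) => by
      rw [map_smul P (χ n u' y) (dl y)])]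
    exact ip_sum_smul (χ n v) (χ n u') (fun y => P (dl y))
  have h2 : P (χ n u') = χ n u' := hP2 _ (chi_mem n u')
  show (∑ y, (ip (χ n v) (P (dl y)) - χ n v y) * χ n u' y) = 0
  calc (∑ y, (ip (χ n v) (P (dl y)) - χ n v y) * χ n u' y)
      = ∑ y, (χ n u' y * ip (χ n v) (P (dl y)) - χ n v y * χ n u' y) := by
        apply Finset.sum_congr rfl; intro y _; ring
    _ = (∑ y, χ n u' y * ip (χ n v) (P (dl y))) - ∑ y, χ n v y * χ n u' y :=
        Finset.sum_sub_distrib _ _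
    _ = ip (χ n v) (P (χ n u')) - ip (χ n v) (χ n u') := by rw [h1]; rfl
    _ = 0 := by rw [h2]; exact sub_self _

lemma J_expand {n : ℕ} (P : (DE n → ℝ) →ₗ[ℝ] (DE n → ℝ))
    (hP2 : ∀ f ∈ cycleSpace n, P f = f) (v : ENode n) (y : DE n) :
    Jv P v y = C0 P v + ∑ u : ONode n, Dc P v u * ψH n u y := by
  have h := complete n (Jv P v) y
  have hE : (∑ v' : ENode n, ip (Jv P v) (χ n v')/nrm2E n v' * χ n v' y) = 0 := by
    apply Finset.sum_eq_zero; intro v' _; rw [J_orth P hP2 v v']; simp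
  rw [hE] at h
  rw [h]
  simp only [C0, Dc]
  ring

lemma coef_eq {n : ℕ} (s : SP n) (v : ENode n) :
    ip (fun e => Phi n (gg n s e)) (χ n v) = epsE n s v * ip (Phi n) (χ n (NE n s v)) := by
  show (∑ x, Phi n (gg n s x) * χ n v x) = _
  rw [show (∑ x, Phi n (gg n s x) * χ n v x) = ∑ x, Phi n x * χ n v (gh n s x) from
    Fintype.sum_equiv (ggEquiv n s) _ _ (fun x => by
      show Phi n (gg n s x) * χ n v x = Phi n (gg n s x) * χ n v (gh n s (gg n s x))
      rw [gh_gg])]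
  rw [Finset.sum_congr rfl (fun x (_ : x ∈ Finset.univ) => by rw [chi_gh n s v x])]
  rw [show (∑ x, Phi n x * (epsE n s v * χ n (NE n s v) x))
      = ∑ x, epsE n s v * (Phi n x * χ n (NE n s v) x) from
    Finset.sum_congr rfl (fun x _ => by ring)]
  rw [← Finset.mul_sum]
  rfl

lemma main_sum {n : ℕ} (s : SP n) :
    (∑ v : ENode n, epsE n s v * ip (Phi n) (χ n (NE n s v)) / nrm2E n v
      * (epsE n s v * χ n (NE n s v) (X0 n))) = PiVal n := by
  calc (∑ v : ENode n, epsE n s v * ip (Phi n) (χ n (NE n s v)) / nrm2E n v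
      * (epsE n s v * χ n (NE n s v) (X0 n)))
      = ∑ v : ENode n, ip (Phi n) (χ n (NE n s v)) / nrm2E n (NE n s v)
          * χ n (NE n s v) (X0 n) := by
        apply Finset.sum_congr rfl; intro v _
        rw [nrm2E_NE n s v]
        have he := epsE_sq n s v
        calc epsE n s v * ip (Phi n) (χ n (NE n s v)) / nrm2E n v
            * (epsE n s v * χ n (NE n s v) (X0 n))
            = (epsE n s v * epsE n s v)
              * (ip (Phi n) (χ n (NE n s v)) / nrm2E n v * χ n (NE n s v) (X0 n)) := by
              ring
          _ = ip (Phi n) (χ n (NE n s v)) / nrm2E n v * χ n (NE n s v) (X0 n) := by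
              rw [he]; ring
    _ = PiVal n := by
        rw [show PiVal n = ∑ v : ENode n, ip (Phi n) (χ n v)/nrm2E n v * χ n v (X0 n)
          from rfl]
        exact Fintype.sum_equiv (NEquiv n s) _ _ (fun v => rfl)

/-- every linear projection of `ℓ₁(E(D_n))` onto the cycle space `Z(D_n)`
has norm at least `(2n+1)/3` (for `n ≥ 1`). -/
theorem stmt13 (n : ℕ) (hn : 1 ≤ n)
    (P : (DE n → ℝ) →ₗ[ℝ] (DE n → ℝ))
    (hP1 : ∀ f, P f ∈ cycleSpace n) (hP2 : ∀ f ∈ cycleSpace n, P f = f)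
    (K : ℝ) (hK : ∀ f, e1norm (P f) ≤ K * e1norm f) :
    (2 * n + 1 : ℝ) / 3 ≤ K := by
  classical
  have hTERM : ∀ s : SP n,
      (∑ e, Phi n (gg n s e) * P (dl (gh n s (X0 n))) e)
      = PiVal n
        + (∑ v : ENode n, epsE n s v * ip (Phi n) (χ n (NE n s v)) * (C0 P v / nrm2E n v))
        + (∑ v : ENode n, ∑ u : ONode n,
            epsE n s v * ip (Phi n) (χ n (NE n s v))
              * (epsO n s u * ψH n (NO n s u) (X0 n)) * (Dc P v u / nrm2E n v)) := by
    intro s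
    set y := gh n s (X0 n) with hy
    have hz := hP1 (dl y)
    have hzf := cyc_facts n (P (dl y)) hz
    have stepA : (∑ e, Phi n (gg n s e) * P (dl y) e)
        = ∑ v : ENode n, ip (fun e => Phi n (gg n s e)) (χ n v)/nrm2E n v
            * ip (χ n v) (P (dl y)) := by
      set w : DE n → ℝ := fun e => Phi n (gg n s e) with hw
      set z : DE n → ℝ := P (dl y) with hz2
      calc (∑ e, w e * z e)
          = ∑ e, ((∑ x, w x)/4^n * z e
            + (∑ v : ENode n, ip w (χ n v)/nrm2E n v * χ n v e) * z e
            + (∑ u : ONode n, ip w (ψH n u)/nrm2O n u * ψH n u e) * z e) := by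
            apply Finset.sum_congr rfl
            intro e _
            conv_lhs => rw [complete n w e]
            ring
        _ = (∑ x, w x)/4^n * (∑ e, z e)
            + (∑ v : ENode n, ip w (χ n v)/nrm2E n v * ip (χ n v) z)
            + (∑ u : ONode n, ip w (ψH n u)/nrm2O n u * ip (ψH n u) z) := by
            rw [Finset.sum_add_distrib, Finset.sum_add_distrib]
            congr 1
            · congr 1
              · rw [← Finset.mul_sum]
              · calc (∑ e, (∑ v : ENode n, ip w (χ n v)/nrm2E n v * χ n v e) * z e)
                    = ∑ e, ∑ v : ENode n, ip w (χ n v)/nrm2E n v * (χ n v e * z e) := by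
                      apply Finset.sum_congr rfl; intro e _
                      rw [Finset.sum_mul]
                      apply Finset.sum_congr rfl; intro v _; ring
                  _ = ∑ v : ENode n, ∑ e, ip w (χ n v)/nrm2E n v * (χ n v e * z e) :=
                      Finset.sum_comm
                  _ = ∑ v : ENode n, ip w (χ n v)/nrm2E n v * ip (χ n v) z := by
                      apply Finset.sum_congr rfl; intro v _
                      rw [← Finset.mul_sum]
                      rfl
            · calc (∑ e, (∑ u : ONode n, ip w (ψH n u)/nrm2O n u * ψH n u e) * z e)
                  = ∑ e, ∑ u : ONode n, ip w (ψH n u)/nrm2O n u * (ψH n u e * z e) := by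
                    apply Finset.sum_congr rfl; intro e _
                    rw [Finset.sum_mul]
                    apply Finset.sum_congr rfl; intro u _; ring
                _ = ∑ u : ONode n, ∑ e, ip w (ψH n u)/nrm2O n u * (ψH n u e * z e) :=
                    Finset.sum_comm
                _ = ∑ u : ONode n, ip w (ψH n u)/nrm2O n u * ip (ψH n u) z := by
                    apply Finset.sum_congr rfl; intro u _
                    rw [← Finset.mul_sum]
                    rfl
        _ = ∑ v : ENode n, ip w (χ n v)/nrm2E n v * ip (χ n v) z := by
            rw [show (∑ e, z e) = 0 from hzf.1]
            have ho : ∀ u : ONode n, ip (ψH n u) z = 0 := fun u => by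
              rw [ip_comm]; exact hzf.2 u
            have ho2 : (∑ u : ONode n, ip w (ψH n u)/nrm2O n u * ip (ψH n u) z) = 0 :=
              Finset.sum_eq_zero (fun u _ => by rw [ho u, mul_zero])
            rw [ho2]
            simp
    have stepB : ∀ v : ENode n, ip (χ n v) (P (dl y))
        = χ n v y + (C0 P v + ∑ u : ONode n, Dc P v u * ψH n u y) := by
      intro v
      have hJ := J_expand P hP2 v y
      have hh : Jv P v y = ip (χ n v) (P (dl y)) - χ n v y := rfl
      rw [hh] at hJ
      linarith
    calc (∑ e, Phi n (gg n s e) * P (dl y) e)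
        = ∑ v : ENode n, ip (fun e => Phi n (gg n s e)) (χ n v)/nrm2E n v
            * ip (χ n v) (P (dl y)) := stepA
      _ = ∑ v : ENode n, (epsE n s v * ip (Phi n) (χ n (NE n s v)))/nrm2E n v
            * (epsE n s v * χ n (NE n s v) (X0 n)
              + (C0 P v + ∑ u : ONode n, Dc P v u * (epsO n s u * ψH n (NO n s u) (X0 n)))) := by
          apply Finset.sum_congr rfl; intro v _
          rw [coef_eq s v, stepB v]
          rw [show χ n v y = epsE n s v * χ n (NE n s v) (X0 n) from chi_gh n s v (X0 n)]
          rw [Finset.sum_congr rfl (fun u (_ : u ∈ Finset.univ) => by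
            rw [show ψH n u y = epsO n s u * ψH n (NO n s u) (X0 n) from psi_gh n s u (X0 n)])]
      _ = (∑ v : ENode n, epsE n s v * ip (Phi n) (χ n (NE n s v)) / nrm2E n v
              * (epsE n s v * χ n (NE n s v) (X0 n)))
          + ((∑ v : ENode n, epsE n s v * ip (Phi n) (χ n (NE n s v)) * (C0 P v / nrm2E n v))
          + (∑ v : ENode n, ∑ u : ONode n,
              epsE n s v * ip (Phi n) (χ n (NE n s v))
                * (epsO n s u * ψH n (NO n s u) (X0 n)) * (Dc P v u / nrm2E n v))) := by
          rw [← Finset.sum_add_distrib, ← Finset.sum_add_distrib]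
          apply Finset.sum_congr rfl; intro v _
          have hS : epsE n s v * ip (Phi n) (χ n (NE n s v)) / nrm2E n v
              * (∑ u : ONode n, Dc P v u * (epsO n s u * ψH n (NO n s u) (X0 n)))
              = ∑ u : ONode n, epsE n s v * ip (Phi n) (χ n (NE n s v))
                  * (epsO n s u * ψH n (NO n s u) (X0 n)) * (Dc P v u / nrm2E n v) := by
            rw [Finset.mul_sum]
            apply Finset.sum_congr rfl; intro u _
            ring
          calc (epsE n s v * ip (Phi n) (χ n (NE n s v)))/nrm2E n v
              * (epsE n s v * χ n (NE n s v) (X0 n)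
                + (C0 P v + ∑ u : ONode n, Dc P v u * (epsO n s u * ψH n (NO n s u) (X0 n))))
              = epsE n s v * ip (Phi n) (χ n (NE n s v)) / nrm2E n v
                  * (epsE n s v * χ n (NE n s v) (X0 n))
                + (epsE n s v * ip (Phi n) (χ n (NE n s v)) * (C0 P v / nrm2E n v)
                + epsE n s v * ip (Phi n) (χ n (NE n s v)) / nrm2E n v
                  * (∑ u : ONode n, Dc P v u * (epsO n s u * ψH n (NO n s u) (X0 n)))) := by
                ring
            _ = _ := by rw [hS]
      _ = _ := by
          rw [main_sum s, ← add_assoc]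
  have hb : ∀ s : SP n, (∑ e, Phi n (gg n s e) * P (dl (gh n s (X0 n))) e) ≤ K := by
    intro s
    calc (∑ e, Phi n (gg n s e) * P (dl (gh n s (X0 n))) e)
        ≤ ∑ e, |Phi n (gg n s e) * P (dl (gh n s (X0 n))) e| :=
          Finset.sum_le_sum (fun e _ => le_abs_self _)
      _ = ∑ e, |Phi n (gg n s e)| * |P (dl (gh n s (X0 n))) e| := by
          apply Finset.sum_congr rfl; intro e _; rw [abs_mul]
      _ ≤ ∑ e, 1 * |P (dl (gh n s (X0 n))) e| :=
          Finset.sum_le_sum (fun e _ =>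
            mul_le_mul_of_nonneg_right (abs_Phi n _) (abs_nonneg _))
      _ = e1norm (P (dl (gh n s (X0 n)))) := by
          apply Finset.sum_congr rfl; intro e _; rw [one_mul]
      _ ≤ K * e1norm (dl (gh n s (X0 n))) := hK _
      _ = K := by rw [e1norm_dl]; ring
  have hsum : (∑ s : SP n, ∑ e, Phi n (gg n s e) * P (dl (gh n s (X0 n))) e)
      = (Fintype.card (SP n) : ℝ) * PiVal n := by
    rw [Finset.sum_congr rfl (fun s (_ : s ∈ Finset.univ) => hTERM s)]
    rw [Finset.sum_add_distrib, Finset.sum_add_distrib]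
    have j1 : (∑ s : SP n, ∑ v : ENode n,
        epsE n s v * ip (Phi n) (χ n (NE n s v)) * (C0 P v / nrm2E n v)) = 0 := by
      rw [Finset.sum_comm]
      apply Finset.sum_eq_zero; intro v _
      rw [← Finset.sum_mul]
      rw [show (∑ s : SP n, epsE n s v * ip (Phi n) (χ n (NE n s v))) = 0 from
        sumE_zero n v (fun v' => ip (Phi n) (χ n v'))]
      ring
    have j2 : (∑ s : SP n, ∑ v : ENode n, ∑ u : ONode n,
        epsE n s v * ip (Phi n) (χ n (NE n s v))
          * (epsO n s u * ψH n (NO n s u) (X0 n)) * (Dc P v u / nrm2E n v)) = 0 := by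
      rw [Finset.sum_comm]
      apply Finset.sum_eq_zero; intro v _
      rw [Finset.sum_comm]
      apply Finset.sum_eq_zero; intro u _
      rw [← Finset.sum_mul]
      rw [show (∑ s : SP n, epsE n s v * ip (Phi n) (χ n (NE n s v))
          * (epsO n s u * ψH n (NO n s u) (X0 n))) = 0 from
        sumEO_zero n v u (fun v' => ip (Phi n) (χ n v')) (fun u' => ψH n u' (X0 n))]
      ring
    rw [j1, j2, Finset.sum_const, Finset.card_univ, nsmul_eq_mul]
    ring
  have h1 : (Fintype.card (SP n) : ℝ) * PiVal n ≤ (Fintype.card (SP n) : ℝ) * K := by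
    rw [← hsum]
    calc (∑ s : SP n, ∑ e, Phi n (gg n s e) * P (dl (gh n s (X0 n))) e)
        ≤ ∑ _s : SP n, K := Finset.sum_le_sum (fun s _ => hb s)
      _ = (Fintype.card (SP n) : ℝ) * K := by
          rw [Finset.sum_const, Finset.card_univ, nsmul_eq_mul]
  have hcard : (0:ℝ) < (Fintype.card (SP n) : ℝ) := by
    exact_mod_cast Fintype.card_pos
  have hPiK : PiVal n ≤ K := le_of_mul_le_mul_left h1 hcard
  have hval := PiVal_val n
  have hpow : (1/4:ℝ)^n ≤ 1/4 := by
    have h := pow_le_pow_of_le_one (by norm_num : (0:ℝ) ≤ 1/4)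
      (by norm_num : (1/4:ℝ) ≤ 1) hn
    simpa using h
  linarith
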